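/- Let d ≥ 1, let μ be a positive Radon measure on ℝ^d, and let (χ_k)_{k≥1} be a sequence of mollifiers with supp χ_k ⊂ B(0, 1/k), χ_k ≥ 0, ∫ χ_k = 1, and 0 ≤ χ_k ≤ C₀ k^d for some constant C₀ depending only on d. Set μ_k := μ * χ_k (so μ_k is the function y ↦ ∫ χ_k(y − z) dμ(z)). Then for every x ∈ ℝ^d, every r > 0, and every k, (1/r) ∫_{B(x,r)} |y − x|^{1−d} μ_k(y) dy ≤ C · M(μ)(x), where C is a positive constant depending only on d and C₀. -/

import Mathlib

open MeasureTheory Filter Metric Set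
open scoped ENNReal Topology

noncomputable section

/-- The (unrestricted) maximal function of a measure:
`M(μ)(x) = sup_{s>0} μ(B(x,s))/|B(x,s)|`. -/
def maximalMeas (d : ℕ) (μ : Measure (EuclideanSpace ℝ (Fin d)))
    (x : EuclideanSpace ℝ (Fin d)) : ℝ≥0∞ :=
  ⨆ (s : ℝ) (_ : 0 < s), μ (ball x s) / volume (ball x s)

/-- Dyadic annuli bound: if `ν (ball x s) ≤ K s^d` for all `s > 0`, then the integral of
`dist z x ^ (1-d)` over `ball x R \ {x}` is at most `K * 2^d * R`. -/
lemma annuli_bound {E : Type*} [MeasurableSpace E] [MetricSpace E]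
    (d : ℕ) (hd : 1 ≤ d) (ν : Measure E) (x : E) (R : ℝ) (hR : 0 < R) (K : ℝ≥0∞)
    (hK : ∀ s : ℝ, 0 < s → ν (ball x s) ≤ K * ENNReal.ofReal (s ^ d)) :
    ∫⁻ z in ball x R \ {x}, ENNReal.ofReal (dist z x ^ (1 - (d:ℝ))) ∂ν
      ≤ K * ENNReal.ofReal (2 ^ d * R) := by
  set A : ℕ → Set E := fun j => ball x (R * (2:ℝ)⁻¹ ^ j) \ ball x (R * (2:ℝ)⁻¹ ^ (j+1)) with hA
  have hcover : ball x R \ {x} ⊆ ⋃ j, A j := by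
    rintro z ⟨hz1, hz2⟩
    have hzx : 0 < dist z x := by
      simp only [mem_singleton_iff] at hz2
      exact dist_pos.2 hz2
    have hzR : dist z x < R := mem_ball.1 hz1
    have ht1 : dist z x / R < 1 := (div_lt_one hR).2 hzR
    have ht0 : 0 < dist z x / R := div_pos hzx hR
    have hex : ∃ n : ℕ, (2:ℝ)⁻¹ ^ n ≤ dist z x / R := by
      obtain ⟨n, hn⟩ := exists_pow_lt_of_lt_one ht0 (by norm_num : (2:ℝ)⁻¹ < 1)
      exact ⟨n, hn.le⟩
    classical
    set m := Nat.find hex with hm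
    have hmle : (2:ℝ)⁻¹ ^ m ≤ dist z x / R := Nat.find_spec hex
    have hm1 : 1 ≤ m := by
      rcases Nat.eq_zero_or_pos m with h0 | h; swap; · exact h
      exfalso; rw [h0] at hmle; simp at hmle; linarith
    refine mem_iUnion.2 ⟨m - 1, ?_, ?_⟩
    · have hlt : ¬ ((2:ℝ)⁻¹ ^ (m-1) ≤ dist z x / R) := Nat.find_min hex (by omega)
      push_neg at hlt
      refine mem_ball.2 ?_
      calc dist z x = (dist z x / R) * R := by field_simp
        _ < (2:ℝ)⁻¹ ^ (m-1) * R := by nlinarith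
        _ = R * (2:ℝ)⁻¹ ^ (m-1) := mul_comm _ _
    · intro hmem
      have h2 := mem_ball.1 hmem
      have hms : m - 1 + 1 = m := by omega
      rw [hms] at h2
      have : dist z x / R < (2:ℝ)⁻¹ ^ m := by
        rw [div_lt_iff₀ hR]; linarith [h2]
      linarith [hmle]
  have hstep : ∀ j : ℕ,
      ∫⁻ z in A j, ENNReal.ofReal (dist z x ^ (1 - (d:ℝ))) ∂ν
        ≤ K * ENNReal.ofReal (2 ^ d / 2 * R) * (2:ℝ≥0∞)⁻¹ ^ j := by
    intro j
    set a : ℝ := R * (2:ℝ)⁻¹ ^ j with ha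
    have ha0 : 0 < a := by positivity
    have ha20 : 0 < a / 2 := by positivity
    have hpt : ∀ z ∈ A j, ENNReal.ofReal (dist z x ^ (1 - (d:ℝ)))
        ≤ ENNReal.ofReal ((a/2) ^ (1 - (d:ℝ))) := by
      intro z hz
      have hge : a / 2 ≤ dist z x := by
        have := hz.2
        simp only [mem_ball, not_lt] at this
        calc a / 2 = R * (2:ℝ)⁻¹ ^ (j+1) := by rw [ha]; ring
          _ ≤ dist z x := this
      exact ENNReal.ofReal_le_ofReal
        (Real.rpow_le_rpow_of_nonpos ha20 hge (sub_nonpos.2 (by exact_mod_cast hd)))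
    calc ∫⁻ z in A j, ENNReal.ofReal (dist z x ^ (1 - (d:ℝ))) ∂ν
        ≤ ∫⁻ _ in A j, ENNReal.ofReal ((a/2) ^ (1 - (d:ℝ))) ∂ν :=
          setLIntegral_mono measurable_const hpt
      _ = ENNReal.ofReal ((a/2) ^ (1 - (d:ℝ))) * ν (A j) := setLIntegral_const _ _
      _ ≤ ENNReal.ofReal ((a/2) ^ (1 - (d:ℝ))) * ν (ball x a) := by
          gcongr
          exact diff_subset
      _ ≤ ENNReal.ofReal ((a/2) ^ (1 - (d:ℝ))) * (K * ENNReal.ofReal (a ^ d)) := by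
          gcongr
          exact hK a ha0
      _ = K * (ENNReal.ofReal ((a/2) ^ (1 - (d:ℝ))) * ENNReal.ofReal (a ^ d)) := by ring
      _ = K * ENNReal.ofReal ((a/2) ^ (1 - (d:ℝ)) * a ^ d) := by
          rw [ENNReal.ofReal_mul (by positivity)]
      _ = K * ENNReal.ofReal (2 ^ d / 2 * R * (2:ℝ)⁻¹ ^ j) := by
          congr 1
          have key : (a/2) ^ (1 - (d:ℝ)) * a ^ d = 2 ^ d / 2 * a := by
            have h1 : (a/2) ^ (1 - (d:ℝ)) = a ^ (1 - (d:ℝ)) * (2:ℝ) ^ ((d:ℝ) - 1) := by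
              rw [div_eq_mul_inv, Real.mul_rpow ha0.le (by positivity)]
              congr 1
              rw [← Real.rpow_neg_one (2:ℝ), ← Real.rpow_mul (by norm_num : (0:ℝ) ≤ 2)]
              congr 1; ring
            rw [h1, ← Real.rpow_natCast a d, mul_comm (a ^ (1 - (d:ℝ))) _, mul_assoc,
              ← Real.rpow_add ha0]
            have : (1 - (d:ℝ)) + d = 1 := by ring
            rw [this, Real.rpow_one]
            congr 1
            rw [← Real.rpow_natCast (2:ℝ) d]
            rw [div_eq_mul_inv, ← Real.rpow_neg_one (2:ℝ), ← Real.rpow_add (by norm_num)]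
            congr 1
          rw [key, ha]; ring
      _ = K * ENNReal.ofReal (2 ^ d / 2 * R) * (2:ℝ≥0∞)⁻¹ ^ j := by
          rw [ENNReal.ofReal_mul (by positivity), mul_assoc]
          congr 1
          rw [ENNReal.ofReal_pow (by norm_num)]
          congr 1
          rw [ENNReal.ofReal_inv_of_pos (by norm_num)]
          norm_num
  calc ∫⁻ z in ball x R \ {x}, ENNReal.ofReal (dist z x ^ (1 - (d:ℝ))) ∂ν
      ≤ ∫⁻ z in ⋃ j, A j, ENNReal.ofReal (dist z x ^ (1 - (d:ℝ))) ∂ν :=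
        lintegral_mono_set hcover
    _ ≤ ∑' j, ∫⁻ z in A j, ENNReal.ofReal (dist z x ^ (1 - (d:ℝ))) ∂ν :=
        lintegral_iUnion_le _ _
    _ ≤ ∑' j : ℕ, K * ENNReal.ofReal (2 ^ d / 2 * R) * (2:ℝ≥0∞)⁻¹ ^ j :=
        ENNReal.tsum_le_tsum hstep
    _ = K * ENNReal.ofReal (2 ^ d / 2 * R) * (1 - 2⁻¹)⁻¹ := by
        rw [ENNReal.tsum_mul_left, ENNReal.tsum_geometric]
    _ = K * ENNReal.ofReal (2 ^ d * R) := by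
        have h2 : ((1:ℝ≥0∞) - 2⁻¹)⁻¹ = 2 := by
          rw [ENNReal.one_sub_inv_two]; simp
        rw [h2, mul_assoc]
        congr 1
        rw [← ENNReal.ofReal_ofNat 2, ← ENNReal.ofReal_mul (by positivity)]
        congr 1; ring

lemma meas_aux1 (d : ℕ) (x : EuclideanSpace ℝ (Fin d)) :
    Measurable fun y : EuclideanSpace ℝ (Fin d) =>
      ENNReal.ofReal (‖y - x‖ ^ (1 - (d:ℝ))) := by measurability

lemma meas_aux2 (d : ℕ) (x : EuclideanSpace ℝ (Fin d)) :
    Measurable fun z : EuclideanSpace ℝ (Fin d) =>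
      ENNReal.ofReal (dist z x ^ (1 - (d:ℝ))) := by measurability

/-- For mollifications `μ_k = μ * χ_k` of a positive Radon measure `μ`:
`(1/r) ∫_{B(x,r)} |y-x|^{1-d} μ_k(y) dy ≤ C M(μ)(x)`, with `C = C(d, C₀)`. -/
theorem statement14 (d : ℕ) (hd : 1 ≤ d) (C₀ : ℝ) (hC₀ : 0 < C₀) :
    ∃ C : ℝ, 0 < C ∧
      ∀ μ : Measure (EuclideanSpace ℝ (Fin d)), IsLocallyFiniteMeasure μ →
      ∀ χ : ℕ → EuclideanSpace ℝ (Fin d) → ℝ,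
        (∀ k, 1 ≤ k → Function.support (χ k) ⊆ ball (0 : EuclideanSpace ℝ (Fin d)) (1 / (k : ℝ))) →
        (∀ k, 1 ≤ k → ∀ y, 0 ≤ χ k y) →
        (∀ k, 1 ≤ k → Integrable (χ k) volume) →
        (∀ k, 1 ≤ k → ∫ y, χ k y = 1) →
        (∀ k, 1 ≤ k → ∀ y, χ k y ≤ C₀ * (k : ℝ) ^ d) →
      ∀ (x : EuclideanSpace ℝ (Fin d)) (r : ℝ), 0 < r → ∀ k, 1 ≤ k →
        (∫⁻ y in ball x r,
            ENNReal.ofReal (‖y - x‖ ^ (1 - (d : ℝ))) *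
              (∫⁻ z, ENNReal.ofReal (χ k (y - z)) ∂μ))
          ≤ ENNReal.ofReal (C * r) * maximalMeas d μ x := by
  classical
  haveI : Nonempty (Fin d) := ⟨⟨0, hd⟩⟩
  haveI : Nontrivial (EuclideanSpace ℝ (Fin d)) := inferInstance
  set ω : ℝ≥0∞ := volume (ball (0 : EuclideanSpace ℝ (Fin d)) 1) with hωdef
  have hωpos : 0 < ω := measure_ball_pos _ _ one_pos
  have hωlt : ω < ⊤ := measure_ball_lt_top
  set w0 : ℝ := ω.toReal with hw0def
  have hw0pos : 0 < w0 := ENNReal.toReal_pos hωpos.ne' hωlt.ne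
  have hωeq : ω = ENNReal.ofReal w0 := (ENNReal.ofReal_toReal hωlt.ne).symm
  set C : ℝ := C₀ * w0 ^ 2 * (6 ^ d + 3 ^ d) with hCdef
  have hCpos : 0 < C := by positivity
  refine ⟨C, hCpos, ?_⟩
  intro μ hμ χ hsupp hχpos hχint hχone hbdd x r hr k hk
  haveI := hμ
  set M := maximalMeas d μ x with hM
  -- volume of balls
  have hvol : ∀ (c : EuclideanSpace ℝ (Fin d)) (s : ℝ), 0 ≤ s →
      volume (ball c s) = ENNReal.ofReal (s ^ d) * ω := by
    intro c s hs
    rw [Measure.addHaar_ball volume c hs, finrank_euclideanSpace_fin]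
  have hμball : ∀ s : ℝ, 0 < s → μ (ball x s) ≤ (M * ω) * ENNReal.ofReal (s ^ d) := by
    intro s hs
    have h1 : μ (ball x s) / volume (ball x s) ≤ M := by
      rw [hM, maximalMeas]
      exact le_iSup₂ (f := fun (s : ℝ) (_ : 0 < s) => μ (ball x s) / volume (ball x s)) s hs
    have hv0 : volume (ball x s) ≠ 0 := (measure_ball_pos _ _ hs).ne'
    have hvt : volume (ball x s) ≠ ⊤ := measure_ball_lt_top.ne
    have h2 := (ENNReal.div_le_iff hv0 hvt).1 h1
    calc μ (ball x s) ≤ M * volume (ball x s) := h2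
      _ = (M * ω) * ENNReal.ofReal (s ^ d) := by rw [hvol x s hs.le]; ring
  by_cases hMtop : M = ⊤
  · have : ENNReal.ofReal (C * r) * M = ⊤ := by
      rw [hMtop, ENNReal.mul_top]
      exact (ENNReal.ofReal_pos.2 (by positivity)).ne'
    rw [hM] at this 
    rw [this]; exact le_top
  -- basic positivity
  have hk0 : (0:ℝ) < k := by exact_mod_cast Nat.lt_of_lt_of_le Nat.zero_lt_one hk
  have hkinv : (0:ℝ) < 1 / k := by positivity
  have h3k : (0:ℝ) < 3 / k := by positivity
  have ekk : (3:ℝ) / (k:ℝ) = 2 / (k:ℝ) + 1 / (k:ℝ) := by ring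
  have ekk3 : (3:ℝ) / (k:ℝ) = 3 * (1 / (k:ℝ)) := by ring
  -- the weight and the indicator
  have hwmeas0 := meas_aux1 d x
  have hdistmeas := meas_aux2 d x
  set w : EuclideanSpace ℝ (Fin d) → ℝ≥0∞ :=
    fun y => ENNReal.ofReal (‖y - x‖ ^ (1 - (d:ℝ))) with hwdef
  have hwmeas : Measurable w := hwmeas0
  set ind : EuclideanSpace ℝ (Fin d) → ℝ≥0∞ :=
    (ball (0:EuclideanSpace ℝ (Fin d)) (1/k)).indicator (fun _ => 1) with hinddef
  have hindmeas : Measurable ind := measurable_const.indicator measurableSet_ball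
  have hindle : ∀ t, ind t ≤ 1 := by
    intro t
    rw [hinddef]
    by_cases h : t ∈ ball (0:EuclideanSpace ℝ (Fin d)) (1/k)
    · rw [indicator_of_mem h]
    · rw [indicator_of_notMem h]; exact zero_le
  set c : ℝ≥0∞ := ENNReal.ofReal (C₀ * (k:ℝ) ^ d) with hcdef
  -- the function g
  set g : EuclideanSpace ℝ (Fin d) → ℝ≥0∞ :=
    fun z => ∫⁻ y in ball x r, w y * ind (y - z) with hgdef
  -- Lemma A : integral of the weight over a ball
  have hwint : ∀ ρ : ℝ, 0 < ρ →
      ∫⁻ y in ball x ρ, w y ≤ ω * ENNReal.ofReal (2 ^ d * ρ) := by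
    intro ρ hρ
    have hae : (ball x ρ \ {x} : Set (EuclideanSpace ℝ (Fin d))) =ᶠ[ae volume]
        (ball x ρ : Set (EuclideanSpace ℝ (Fin d))) :=
      diff_ae_eq_self.2 (measure_mono_null inter_subset_right (measure_singleton x))
    rw [← setLIntegral_congr hae]
    have heq : ∀ y : EuclideanSpace ℝ (Fin d),
        w y = ENNReal.ofReal (dist y x ^ (1 - (d:ℝ))) := by
      intro y; rw [hwdef, dist_eq_norm]
    calc ∫⁻ y in ball x ρ \ {x}, w y
        = ∫⁻ y in ball x ρ \ {x}, ENNReal.ofReal (dist y x ^ (1 - (d:ℝ))) := by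
          exact lintegral_congr fun y => heq y
      _ ≤ ω * ENNReal.ofReal (2 ^ d * ρ) := by
          refine annuli_bound d hd volume x ρ hρ ω ?_
          intro s hs
          rw [hvol x s hs.le]; rw [mul_comm]
  -- global bound on g
  have hgle : ∀ z, g z ≤ ω * ENNReal.ofReal (2 ^ d * r) := by
    intro z
    refine le_trans ?_ (hwint r hr)
    rw [hgdef]
    refine lintegral_mono fun y => ?_
    calc w y * ind (y - z) ≤ w y * 1 := mul_le_mul_right (hindle _) _
      _ = w y := mul_one _
  -- Step 1: bound the inner integral pointwise and swap
  have hpoint : ∀ y z : EuclideanSpace ℝ (Fin d),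
      ENNReal.ofReal (χ k (y - z)) ≤ c * ind (y - z) := by
    intro y z
    by_cases hmem : y - z ∈ ball (0:EuclideanSpace ℝ (Fin d)) (1/k)
    · rw [hinddef]
      rw [indicator_of_mem hmem, mul_one, hcdef]
      exact ENNReal.ofReal_le_ofReal (hbdd k hk _)
    · have hz : χ k (y - z) = 0 := by
        by_contra h
        exact hmem (hsupp k hk (Function.mem_support.2 h))
      rw [hz, ENNReal.ofReal_zero]
      exact zero_le
  have hswap :
      ∫⁻ y in ball x r, ∫⁻ z, w y * (c * ind (y - z)) ∂μ
        = ∫⁻ z, (∫⁻ y in ball x r, w y * (c * ind (y - z))) ∂μ := by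
    exact lintegral_lintegral_swap (μ := volume.restrict (ball x r)) (ν := μ)
      (f := fun y z => w y * (c * ind (y - z)))
      (Measurable.aemeasurable (((hwmeas.comp measurable_fst)).mul
        (measurable_const.mul (hindmeas.comp (measurable_fst.sub measurable_snd)))))
  have hstep1 :
      (∫⁻ y in ball x r,
          ENNReal.ofReal (‖y - x‖ ^ (1 - (d : ℝ))) *
            (∫⁻ z, ENNReal.ofReal (χ k (y - z)) ∂μ))
        ≤ c * ∫⁻ z, g z ∂μ := by
    have h1 : (∫⁻ y in ball x r,
          ENNReal.ofReal (‖y - x‖ ^ (1 - (d : ℝ))) *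
            (∫⁻ z, ENNReal.ofReal (χ k (y - z)) ∂μ))
        ≤ ∫⁻ y in ball x r, ∫⁻ z, w y * (c * ind (y - z)) ∂μ := by
      refine lintegral_mono fun y => ?_
      rw [lintegral_const_mul' (w y) _ ENNReal.ofReal_ne_top]
      exact mul_le_mul_right (lintegral_mono fun z => hpoint y z) _
    rw [hswap] at h1
    refine h1.trans (le_of_eq ?_)
    have h2 : ∀ z : EuclideanSpace ℝ (Fin d),
        ∫⁻ y in ball x r, w y * (c * ind (y - z)) = c * g z := by
      intro z
      rw [hgdef]
      rw [← lintegral_const_mul' c _ ENNReal.ofReal_ne_top]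
      exact lintegral_congr fun y => by ring
    calc ∫⁻ z, (∫⁻ y in ball x r, w y * (c * ind (y - z))) ∂μ
        = ∫⁻ z, c * g z ∂μ := lintegral_congr h2
      _ = c * ∫⁻ z, g z ∂μ := lintegral_const_mul' c _ ENNReal.ofReal_ne_top
  -- split the z-integral
  have hsplit : ∫⁻ z, g z ∂μ
      = ∫⁻ z in ball x (3/k), g z ∂μ + ∫⁻ z in (ball x (3/k))ᶜ, g z ∂μ :=
    (lintegral_add_compl g measurableSet_ball).symm
  -- Part 1
  have hpart1 : ∫⁻ z in ball x (3/k), g z ∂μ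
      ≤ (ω * ENNReal.ofReal (2 ^ d * r)) * ((M * ω) * ENNReal.ofReal ((3/k) ^ d)) := by
    calc ∫⁻ z in ball x (3/k), g z ∂μ
        ≤ ∫⁻ _ in ball x (3/k), (ω * ENNReal.ofReal (2 ^ d * r)) ∂μ :=
          setLIntegral_mono measurable_const fun z _ => hgle z
      _ = (ω * ENNReal.ofReal (2 ^ d * r)) * μ (ball x (3/k)) := setLIntegral_const _ _
      _ ≤ (ω * ENNReal.ofReal (2 ^ d * r)) * ((M * ω) * ENNReal.ofReal ((3/k) ^ d)) := by
          gcongr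
          exact hμball _ h3k
  -- Part 2
  set T : Set (EuclideanSpace ℝ (Fin d)) := ball x (r + 1/k) \ ball x (3/k) with hTdef
  set B : ℝ≥0∞ := ENNReal.ofReal ((3/2:ℝ) ^ ((d:ℝ) - 1) * (1/k) ^ d) * ω with hBdef
  have hBne : B ≠ ⊤ := ENNReal.mul_ne_top ENNReal.ofReal_ne_top hωlt.ne
  have hgz : ∀ z ∈ (ball x (3/k))ᶜ,
      g z ≤ T.indicator (fun z => B * ENNReal.ofReal (dist z x ^ (1 - (d:ℝ)))) z := by
    intro z hz
    have hs3 : 3/k ≤ dist z x := not_lt.1 fun h => hz (mem_ball.2 h)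
    have hs0 : 0 < dist z x := lt_of_lt_of_le h3k hs3
    by_cases hzR : dist z x < r + 1/k
    · have hzT : z ∈ T := ⟨mem_ball.2 hzR, hz⟩
      rw [indicator_of_mem hzT]
      have hpt : ∀ y ∈ ball x r,
          w y * ind (y - z)
            ≤ ENNReal.ofReal ((2 * dist z x / 3) ^ (1 - (d:ℝ))) * ind (y - z) := by
        intro y hy
        by_cases hmem : y - z ∈ ball (0:EuclideanSpace ℝ (Fin d)) (1/k)
        · have hyz : ‖y - z‖ < 1/k := mem_ball_zero_iff.1 hmem
          have htri : dist z x ≤ ‖y - z‖ + ‖y - x‖ := by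
            calc dist z x ≤ dist z y + dist y x := dist_triangle z y x
              _ = ‖y - z‖ + ‖y - x‖ := by rw [dist_eq_norm, dist_eq_norm, norm_sub_rev z y]
          have h13 : 1/k ≤ dist z x / 3 := by
            rw [ekk3] at hs3; linarith
          have h1 : 2 * dist z x / 3 ≤ ‖y - x‖ := by linarith
          have h20 : 0 < 2 * dist z x / 3 := by positivity
          refine mul_le_mul_left ?_ _
          rw [hwdef]
          exact ENNReal.ofReal_le_ofReal
            (Real.rpow_le_rpow_of_nonpos h20 h1 (sub_nonpos.2 (by exact_mod_cast hd)))
        · rw [hinddef, indicator_of_notMem hmem, mul_zero, mul_zero]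
      have hindz : (fun y => ind (y - z))
          = (ball z (1/k)).indicator (fun _ => (1:ℝ≥0∞)) := by
        funext y
        rw [hinddef]
        by_cases h : y ∈ ball z (1/k)
        · have : y - z ∈ ball (0:EuclideanSpace ℝ (Fin d)) (1/k) := by
            rw [mem_ball_zero_iff, ← dist_eq_norm]; exact mem_ball.1 h
          rw [indicator_of_mem this, indicator_of_mem h]
        · have : y - z ∉ ball (0:EuclideanSpace ℝ (Fin d)) (1/k) := by
            intro hmem
            exact h (mem_ball.2 (by rw [dist_eq_norm]; exact mem_ball_zero_iff.1 hmem))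
          rw [indicator_of_notMem this, indicator_of_notMem h]
      calc g z ≤ ∫⁻ y in ball x r,
            ENNReal.ofReal ((2 * dist z x / 3) ^ (1 - (d:ℝ))) * ind (y - z) := by
            rw [hgdef]
            exact setLIntegral_mono
              (measurable_const.mul (hindmeas.comp (measurable_id.sub measurable_const))) hpt
        _ = ENNReal.ofReal ((2 * dist z x / 3) ^ (1 - (d:ℝ)))
              * ∫⁻ y in ball x r, ind (y - z) :=
            lintegral_const_mul' _ _ ENNReal.ofReal_ne_top
        _ ≤ ENNReal.ofReal ((2 * dist z x / 3) ^ (1 - (d:ℝ)))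
              * ∫⁻ y, ind (y - z) := by
            gcongr
            exact Measure.restrict_le_self
        _ = ENNReal.ofReal ((2 * dist z x / 3) ^ (1 - (d:ℝ)))
              * (ENNReal.ofReal ((1/k) ^ d) * ω) := by
            rw [hindz, lintegral_indicator measurableSet_ball]
            rw [setLIntegral_const, one_mul, hvol z (1/k) hkinv.le]
        _ = B * ENNReal.ofReal (dist z x ^ (1 - (d:ℝ))) := by
            rw [hBdef]
            rw [ENNReal.ofReal_mul (by positivity)]
            have hkey : ENNReal.ofReal ((2 * dist z x / 3) ^ (1 - (d:ℝ)))
                = ENNReal.ofReal ((3/2:ℝ) ^ ((d:ℝ) - 1)) * ENNReal.ofReal (dist z x ^ (1 - (d:ℝ))) := by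
              rw [← ENNReal.ofReal_mul (by positivity)]
              congr 1
              have : (2 * dist z x / 3 : ℝ) = (2/3) * dist z x := by ring
              rw [this, Real.mul_rpow (by norm_num) hs0.le]
              congr 1
              have h23 : (2/3 : ℝ) = (3/2:ℝ)⁻¹ := by norm_num
              rw [h23, ← Real.rpow_neg_one (3/2:ℝ), ← Real.rpow_mul (by norm_num : (0:ℝ) ≤ 3/2)]
              congr 1; ring
            rw [hkey]; ring
    · -- far away: g z = 0
      have hzero : ∀ y ∈ ball x r, w y * ind (y - z) ≤ 0 := by
        intro y hy
        have hmem : y - z ∉ ball (0:EuclideanSpace ℝ (Fin d)) (1/k) := by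
          intro h
          have hyz : ‖y - z‖ < 1/k := mem_ball_zero_iff.1 h
          have htri : dist z x ≤ ‖y - z‖ + ‖y - x‖ := by
            calc dist z x ≤ dist z y + dist y x := dist_triangle z y x
              _ = ‖y - z‖ + ‖y - x‖ := by rw [dist_eq_norm, dist_eq_norm, norm_sub_rev z y]
          have hyx : ‖y - x‖ < r := by rw [← dist_eq_norm]; exact mem_ball.1 hy
          push_neg at hzR
          linarith
        rw [hinddef, indicator_of_notMem hmem, mul_zero]
      have h0 : g z ≤ 0 := by
        rw [hgdef]
        calc (∫⁻ y in ball x r, w y * ind (y - z))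
            ≤ ∫⁻ _ in ball x r, 0 := setLIntegral_mono measurable_const hzero
          _ = 0 := by simp
      exact h0.trans zero_le
  have hpart2 : ∫⁻ z in (ball x (3/k))ᶜ, g z ∂μ
      ≤ B * ((M * ω) * ENNReal.ofReal (2 ^ d * (3/2 * r))) := by
    have hTmeas : MeasurableSet T := measurableSet_ball.diff measurableSet_ball
    have hindTmeas : Measurable
        (T.indicator (fun z => B * ENNReal.ofReal (dist z x ^ (1 - (d:ℝ))))) := by
      refine Measurable.indicator ?_ hTmeas
      exact measurable_const.mul hdistmeas
    have hTbound : ∫⁻ z in T, ENNReal.ofReal (dist z x ^ (1 - (d:ℝ))) ∂μ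
        ≤ (M * ω) * ENNReal.ofReal (2 ^ d * (3/2 * r)) := by
      rcases le_or_gt r (2/k) with hcase | hcase
      · have hTempty : T = ∅ := by
          rw [hTdef]
          ext z
          simp only [mem_diff, mem_ball, mem_empty_iff_false, iff_false, not_and, not_not]
          intro h1
          exact mem_ball.2 (by rw [ekk]; linarith)
        rw [hTempty]
        simp
      · have hsub : T ⊆ ball x (r + 1/k) \ {x} := by
          rintro z ⟨hz1, hz2⟩
          refine ⟨hz1, ?_⟩
          simp only [mem_singleton_iff]
          intro h
          apply hz2
          rw [h]
          exact mem_ball.2 (by simpa using h3k)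
        calc ∫⁻ z in T, ENNReal.ofReal (dist z x ^ (1 - (d:ℝ))) ∂μ
            ≤ ∫⁻ z in ball x (r + 1/k) \ {x},
                ENNReal.ofReal (dist z x ^ (1 - (d:ℝ))) ∂μ := lintegral_mono_set hsub
          _ ≤ (M * ω) * ENNReal.ofReal (2 ^ d * (r + 1/k)) :=
              annuli_bound d hd μ x (r + 1/k) (by positivity) (M * ω) hμball
          _ ≤ (M * ω) * ENNReal.ofReal (2 ^ d * (3/2 * r)) := by
              gcongr
              have : 1/k < r/2 := by
                rw [div_lt_iff₀ hk0] at hcase ⊢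
                linarith
              linarith
    calc ∫⁻ z in (ball x (3/k))ᶜ, g z ∂μ
        ≤ ∫⁻ z in (ball x (3/k))ᶜ,
            T.indicator (fun z => B * ENNReal.ofReal (dist z x ^ (1 - (d:ℝ)))) z ∂μ :=
          setLIntegral_mono hindTmeas hgz
      _ ≤ ∫⁻ z, T.indicator (fun z => B * ENNReal.ofReal (dist z x ^ (1 - (d:ℝ)))) z ∂μ :=
          setLIntegral_le_lintegral _ _
      _ = ∫⁻ z in T, B * ENNReal.ofReal (dist z x ^ (1 - (d:ℝ))) ∂μ :=
          lintegral_indicator hTmeas _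
      _ = B * ∫⁻ z in T, ENNReal.ofReal (dist z x ^ (1 - (d:ℝ))) ∂μ :=
          lintegral_const_mul' _ _ hBne
      _ ≤ B * ((M * ω) * ENNReal.ofReal (2 ^ d * (3/2 * r))) := by
          gcongr
  -- combine everything
  have hcomb : (∫⁻ y in ball x r,
        ENNReal.ofReal (‖y - x‖ ^ (1 - (d : ℝ))) *
          (∫⁻ z, ENNReal.ofReal (χ k (y - z)) ∂μ))
      ≤ c * ((ω * ENNReal.ofReal (2 ^ d * r)) * ((M * ω) * ENNReal.ofReal ((3/k) ^ d))
          + B * ((M * ω) * ENNReal.ofReal (2 ^ d * (3/2 * r)))) := by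
    refine hstep1.trans ?_
    rw [hsplit]
    exact mul_le_mul_right (add_le_add hpart1 hpart2) c
  refine hcomb.trans ?_
  -- now pure ENNReal/real arithmetic
  have hkd : ((3:ℝ)/k) ^ d * (k:ℝ) ^ d = 3 ^ d := by
    rw [← mul_pow]; congr 1; field_simp
  have hkd1 : ((1:ℝ)/k) ^ d * (k:ℝ) ^ d = 1 := by
    rw [← mul_pow]
    have : (1/k : ℝ) * k = 1 := by field_simp
    rw [this, one_pow]
  have h32 : (3/2:ℝ) ^ ((d:ℝ) - 1) * (2 ^ d * (3/2)) = 3 ^ d := by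
    have h1 : (3/2:ℝ) ^ ((d:ℝ) - 1) * (3/2) = (3/2:ℝ) ^ (d:ℝ) := by
      nth_rewrite 2 [← Real.rpow_one (3/2:ℝ)]
      rw [← Real.rpow_add (by norm_num)]
      congr 1; ring
    have h2 : (3/2:ℝ) ^ (d:ℝ) * 2 ^ (d:ℝ) = 3 ^ (d:ℝ) := by
      rw [← Real.mul_rpow (by norm_num) (by norm_num)]
      norm_num
    calc (3/2:ℝ) ^ ((d:ℝ) - 1) * (2 ^ d * (3/2))
        = ((3/2:ℝ) ^ ((d:ℝ) - 1) * (3/2)) * 2 ^ d := by ring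
      _ = (3/2:ℝ) ^ (d:ℝ) * 2 ^ d := by rw [h1]
      _ = (3/2:ℝ) ^ (d:ℝ) * 2 ^ (d:ℝ) := by rw [Real.rpow_natCast 2 d]
      _ = 3 ^ (d:ℝ) := h2
      _ = 3 ^ d := Real.rpow_natCast 3 d
  -- rewrite ω as ofReal w0 and push all ofReals together
  have hmul : ∀ p q u v : ℝ, 0 ≤ p → 0 ≤ q → 0 ≤ u → 0 ≤ v →
      ENNReal.ofReal p * ENNReal.ofReal q * (M * ENNReal.ofReal u * ENNReal.ofReal v)
        = M * ENNReal.ofReal (p * q * u * v) := by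
    intro p q u v hp hq hu hv
    rw [show p*q*u*v = (p*q)*(u*v) by ring, ENNReal.ofReal_mul (by positivity),
      ENNReal.ofReal_mul hp, ENNReal.ofReal_mul hu]
    ring
  rw [hcdef, hBdef, hωeq]
  rw [hmul w0 (2 ^ d * r) w0 ((3/(k:ℝ)) ^ d) (by positivity) (by positivity)
      (by positivity) (by positivity),
    hmul ((3/2:ℝ) ^ ((d:ℝ) - 1) * (1/(k:ℝ)) ^ d) w0 w0 (2 ^ d * (3/2 * r))
      (by positivity) (by positivity) (by positivity) (by positivity),
    ← mul_add M, ← ENNReal.ofReal_add (by positivity) (by positivity)]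
  set A1 : ℝ := w0 * (2 ^ d * r) * w0 * ((3/(k:ℝ)) ^ d) with hA1
  set A2 : ℝ := (3/2:ℝ) ^ ((d:ℝ) - 1) * (1/(k:ℝ)) ^ d * w0 * w0 * (2 ^ d * (3/2 * r)) with hA2
  have hreal : C₀ * (k:ℝ) ^ d * (A1 + A2) = C * r := by
    have goal1 : C₀ * (k:ℝ) ^ d * A1 = C₀ * w0 ^ 2 * 6 ^ d * r := by
      rw [hA1]
      have e : C₀ * (k:ℝ) ^ d * (w0 * (2 ^ d * r) * w0 * ((3/(k:ℝ)) ^ d))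
          = C₀ * w0 ^ 2 * (2 ^ d * (((3:ℝ)/(k:ℝ)) ^ d * (k:ℝ) ^ d)) * r := by ring
      rw [e, hkd, show (2:ℝ) ^ d * 3 ^ d = 6 ^ d by rw [← mul_pow]; norm_num]
    have goal2 : C₀ * (k:ℝ) ^ d * A2 = C₀ * w0 ^ 2 * 3 ^ d * r := by
      rw [hA2]
      have e : C₀ * (k:ℝ) ^ d * ((3/2:ℝ) ^ ((d:ℝ) - 1) * (1/(k:ℝ)) ^ d * w0 * w0 * (2 ^ d * (3/2 * r)))
          = C₀ * w0 ^ 2 * ((3/2:ℝ) ^ ((d:ℝ) - 1) * (2 ^ d * (3/2))) * (((1:ℝ)/(k:ℝ)) ^ d * (k:ℝ) ^ d) * r := by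
        ring
      rw [e, hkd1, h32]
      ring
    calc C₀ * (k:ℝ) ^ d * (A1 + A2)
        = C₀ * (k:ℝ) ^ d * A1 + C₀ * (k:ℝ) ^ d * A2 := by ring
      _ = C₀ * w0 ^ 2 * 6 ^ d * r + C₀ * w0 ^ 2 * 3 ^ d * r := by rw [goal1, goal2]
      _ = C * r := by rw [hCdef]; ring
  calc ENNReal.ofReal (C₀ * (k:ℝ) ^ d) * (M * ENNReal.ofReal (A1 + A2))
      = M * ENNReal.ofReal (C₀ * (k:ℝ) ^ d * (A1 + A2)) := by
        rw [ENNReal.ofReal_mul (p := C₀ * (k:ℝ) ^ d) (by positivity)]; ring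
    _ = M * ENNReal.ofReal (C * r) := by rw [hreal]
    _ ≤ ENNReal.ofReal (C * r) * M := le_of_eq (mul_comm _ _)
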